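/- Let z₁,…,zₙ be nonzero complex numbers satisfying the twist-knot hyperbolicity equations (as in the paper's equations (4),(5),(6)). Then zₙ = 1 + (1 − 1/z₁)². -/

import Mathlib

/-- The twist-knot hyperbolicity equations (4),(5),(6) for `C(2,n+1)`, for
nonzero complex numbers `z 1, …, z n`. -/
def TwistSol (n : ℕ) (z : ℕ → ℂ) : Prop :=
  (∀ k, 1 ≤ k → k ≤ n → z k ≠ 0) ∧
  (1 - z 1 / z 2 = 1 - 1 / z 1 - z 1 + 1) ∧
  (∀ k, 2 ≤ k → k ≤ n - 1 →
    1 - z k / z (k + 1) + 1 / z (k + 1) - 1 / z k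
      = 1 - z (k - 1) / z k - z k + z (k - 1)) ∧
  (1 - 1 / z n = 1 - z (n - 1) / z n - z n + z (n - 1))

/-- any solution of the twist-knot hyperbolicity equations
satisfies `zₙ = 1 + (1 − 1/z₁)²`. -/
theorem stmt_9 (n : ℕ) (hn : 2 ≤ n) (z : ℕ → ℂ) (hz : TwistSol n z) :
    z n = 1 + (1 - 1 / z 1) ^ 2 := by
  obtain ⟨hnz, h4, h5, h6⟩ := hz
  have h1 : z 1 ≠ 0 := hnz 1 le_rfl (by omega)
  have h2 : z 2 ≠ 0 := hnz 2 one_le_two hn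
  have key : ∀ m, 2 ≤ m → m ≤ n →
      1 - z (m - 1) / z m - z m + z (m - 1)
        = 2 - 1 / z 1 + 1 / z 2 - 1 / z m - z m := by
    intro m hm
    induction m, hm using Nat.le_induction with
    | base =>
      intro _
      simp only [show (2 : ℕ) - 1 = 1 from rfl]
      linear_combination h4
    | succ m hm ih =>
      intro hsm
      have e5 := h5 m hm (by omega)
      have ihm := ih (by omega)
      simp only [Nat.add_sub_cancel]
      linear_combination e5 + ihm
  have hk := key n hn le_rfl
  have hzn : z n = 1 - 1 / z 1 + 1 / z 2 := by linear_combination hk + h6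
  rw [hzn]
  field_simp
  field_simp at h4
  linear_combination (-1 : ℂ) * h4
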